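/- For every integer n ≥ 4 and every k ∈ {1,…,n}, the subgraph of CW_n induced by the vertices not lying in the copy CW_n^k (i.e. induced by {σ ∈ S_n : σ(n) ≠ k}) has vertex connectivity at least 2n − 4. -/

import Mathlib

/-- The generating set S₂ = {(1 j) : 2 ≤ j ≤ n} ∪ {(j j+1) : 2 ≤ j ≤ n−1} ∪ {(2 n)},
where elements of {1,…,n} are encoded zero-indexed as `Fin n` (value k represents k+1). -/
def cwGen (n : ℕ) : Set (Equiv.Perm (Fin n)) :=
  {s | ∃ i j : Fin n, s = Equiv.swap i j ∧
      (((i : ℕ) = 0 ∧ j ≠ i) ∨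
       ((j : ℕ) = (i : ℕ) + 1 ∧ 1 ≤ (i : ℕ)) ∨
       ((i : ℕ) = 1 ∧ (j : ℕ) = n - 1))}

/-- The Cayley graph CW_n = Cay(S_n, S₂). -/
def CW (n : ℕ) : SimpleGraph (Equiv.Perm (Fin n)) where
  Adj g h := g ≠ h ∧ g⁻¹ * h ∈ cwGen n
  symm := by
    constructor
    rintro g h ⟨hne, i, j, hs, hc⟩
    refine ⟨hne.symm, i, j, ?_, hc⟩
    have hinv : h⁻¹ * g = (g⁻¹ * h)⁻¹ := by group
    rw [hinv, hs, Equiv.swap_inv]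
  loopless := ⟨fun g h => h.1 rfl⟩

/-- The vertex connectivity κ(G): the least size of a vertex set S such that G − S
is disconnected or has at most one vertex. -/
noncomputable def kappa {V : Type*} (G : SimpleGraph V) : ℕ :=
  sInf {k | ∃ S : Set V, S.ncard = k ∧ (¬ (G.induce Sᶜ).Connected ∨ Sᶜ.ncard ≤ 1)}

open Equiv Set Relation

namespace CWP

/-- generating set of star + path -/
def genSP (m : ℕ) : Set (Equiv.Perm (Fin m)) :=
  {s | ∃ i j : Fin m, s = Equiv.swap i j ∧
      (((i : ℕ) = 0 ∧ j ≠ i) ∨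
       ((j : ℕ) = (i : ℕ) + 1 ∧ 1 ≤ (i : ℕ)))}

def SP (m : ℕ) : SimpleGraph (Equiv.Perm (Fin m)) where
  Adj g h := g ≠ h ∧ g⁻¹ * h ∈ genSP m
  symm := by
    constructor
    rintro g h ⟨hne, i, j, hs, hc⟩
    refine ⟨hne.symm, i, j, ?_, hc⟩
    have hinv : h⁻¹ * g = (g⁻¹ * h)⁻¹ := by group
    rw [hinv, hs, Equiv.swap_inv]
  loopless := ⟨fun g h => h.1 rfl⟩

variable {V : Type*} {ι : Type*}

/-- chain inside a vertex set -/
def Chain (G : SimpleGraph V) (T : Set V) (u v : V) : Prop :=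
  Relation.ReflTransGen (fun a b => a ∈ T ∧ b ∈ T ∧ G.Adj a b) u v

lemma Chain.mono {G : SimpleGraph V} {T T' : Set V} (h : T ⊆ T') {u v : V}
    (hc : Chain G T u v) : Chain G T' u v :=
  Relation.ReflTransGen.mono (fun a b hr => ⟨h hr.1, h hr.2.1, hr.2.2⟩) _ _ hc

lemma Chain.step {G : SimpleGraph V} {T : Set V} {u v : V} (hu : u ∈ T) (hv : v ∈ T)
    (h : G.Adj u v) : Chain G T u v :=
  Relation.ReflTransGen.single ⟨hu, hv, h⟩

lemma Chain.symm {G : SimpleGraph V} {T : Set V} {u v : V} (h : Chain G T u v) :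
    Chain G T v u := by
  have : Std.Symm (fun a b => a ∈ T ∧ b ∈ T ∧ G.Adj a b) :=
    ⟨fun a b hab => ⟨hab.2.1, hab.1, hab.2.2.symm⟩⟩
  exact (Relation.ReflTransGen.symmetric (r := fun a b => a ∈ T ∧ b ∈ T ∧ G.Adj a b)).symm _ _ h

/-- Gluing lemma: copies indexed by `c`, all fibers over `I'`. -/
lemma glue {G : SimpleGraph V} {T : Set V} {c : V → ι} {I' : Set ι}
    (hT : ∀ v ∈ T, c v ∈ I')
    (intra : ∀ i ∈ I', ∀ u v : V, u ∈ T → v ∈ T → c u = i → c v = i → Chain G T u v)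
    (cross : ∀ A : Set ι, A ⊆ I' → (∃ u ∈ T, c u ∈ A) → (∃ v ∈ T, c v ∈ I' ∧ c v ∉ A) →
      ∃ a b : V, a ∈ T ∧ b ∈ T ∧ c a ∈ A ∧ c b ∉ A ∧ G.Adj a b) :
    ∀ u v : V, u ∈ T → v ∈ T → Chain G T u v := by
  intro u v hu hv
  set A : Set ι := {i | i ∈ I' ∧ ∃ w, w ∈ T ∧ c w = i ∧ Chain G T u w} with hA
  have hcu : c u ∈ A := ⟨hT u hu, u, hu, rfl, Relation.ReflTransGen.refl⟩
  have hAI : A ⊆ I' := fun i hi => hi.1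
  have hcv : c v ∈ A := by
    by_contra hnot
    obtain ⟨a, b, ha, hb, hca, hcb, hadj⟩ :=
      cross A hAI ⟨u, hu, hcu⟩ ⟨v, hv, hT v hv, hnot⟩
    obtain ⟨_, w, hw, hcw, hchain⟩ := hca
    have hwa : Chain G T w a := intra (c a) (hT a ha) w a hw ha hcw rfl
    have hub : Chain G T u b :=
      (hchain.trans hwa).trans (Chain.step ha hb hadj)
    exact hcb ⟨hT b hb, b, hb, rfl, hub⟩
  obtain ⟨_, w, hw, hcw, hchain⟩ := hcv
  exact hchain.trans (intra (c v) (hT v hv) w v hw hv hcw rfl)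

/-! ### Extension of permutations along `Fin.castSucc` -/

variable {m : ℕ}

/-- `Fin m` is equivalent to the non-last elements of `Fin (m+1)`. -/
def eL (m : ℕ) : Fin m ≃ {x : Fin (m + 1) // x ≠ Fin.last m} where
  toFun j := ⟨j.castSucc, Fin.ne_last_of_lt (by exact j.castSucc_lt_last)⟩
  invFun x := ⟨(x : Fin (m + 1)).val, by
    have := (x : Fin (m + 1)).isLt
    have hx : ((x : Fin (m + 1)) : ℕ) ≠ m := fun h => x.2 (Fin.ext h)
    omega⟩
  left_inv j := by ext; simp
  right_inv x := by ext; simp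

/-- Extend a permutation of `Fin m` to `Fin (m+1)` fixing the last element. -/
def ext (π : Equiv.Perm (Fin m)) : Equiv.Perm (Fin (m + 1)) :=
  π.extendDomain (eL m)

lemma ext_mul (π π' : Equiv.Perm (Fin m)) : ext (π * π') = ext π * ext π' := by
  simp [ext]

lemma ext_apply_castSucc (π : Equiv.Perm (Fin m)) (j : Fin m) :
    ext π j.castSucc = (π j).castSucc := by
  have := Equiv.Perm.extendDomain_apply_image π (eL m) j
  simpa [ext, eL] using this

lemma ext_apply_last (π : Equiv.Perm (Fin m)) : ext π (Fin.last m) = Fin.last m :=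
  Equiv.Perm.extendDomain_apply_not_subtype π (eL m) (by simp)

lemma ext_injective : Function.Injective (ext (m := m)) := by
  intro a b h
  ext j
  have := congrArg (fun σ : Equiv.Perm (Fin (m+1)) => σ j.castSucc) h
  simp only [ext_apply_castSucc] at this
  exact congrArg Fin.val (Fin.castSucc_injective m this)

lemma ext_inv (π : Equiv.Perm (Fin m)) : (ext π)⁻¹ = ext π⁻¹ := by
  simp [ext]

lemma ext_swap (a b : Fin m) : ext (Equiv.swap a b) = Equiv.swap a.castSucc b.castSucc := by
  apply Equiv.ext
  intro x
  induction x using Fin.lastCases with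
  | last =>
      rw [ext_apply_last, Equiv.swap_apply_of_ne_of_ne]
      · exact (Fin.ne_last_of_lt (Fin.castSucc_lt_last a)).symm
      · exact (Fin.ne_last_of_lt (Fin.castSucc_lt_last b)).symm
  | cast j =>
      rw [ext_apply_castSucc]
      rcases eq_or_ne j a with rfl | hja
      · simp
      rcases eq_or_ne j b with rfl | hjb
      · simp
      rw [Equiv.swap_apply_of_ne_of_ne hja hjb,
        Equiv.swap_apply_of_ne_of_ne (fun h => hja (Fin.castSucc_injective m h))
          (fun h => hjb (Fin.castSucc_injective m h))]

/-- A permutation fixing the last element is an extension. -/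
lemma ext_surj {σ : Equiv.Perm (Fin (m + 1))} (h : σ (Fin.last m) = Fin.last m) :
    ∃ π : Equiv.Perm (Fin m), ext π = σ := by
  have hne : ∀ j : Fin m, σ j.castSucc ≠ Fin.last m := by
    intro j hj
    exact (Fin.ne_last_of_lt (Fin.castSucc_lt_last j))
      (σ.injective (hj.trans h.symm))
  set f : Fin m → Fin m := fun j => (σ j.castSucc).castPred (hne j) with hf
  have hinj : Function.Injective f := by
    intro a b hab
    have : σ a.castSucc = σ b.castSucc := by
      have := congrArg Fin.castSucc hab
      simpa [hf, Fin.castSucc_castPred] using this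
    exact Fin.castSucc_injective m (σ.injective this)
  obtain ⟨π, hπ⟩ : ∃ π : Equiv.Perm (Fin m), ∀ j, π j = f j := by
    have hbij := (Finite.injective_iff_bijective).mp hinj
    exact ⟨Equiv.ofBijective f hbij, fun j => rfl⟩
  refine ⟨π, Equiv.ext fun x => ?_⟩
  induction x using Fin.lastCases with
  | last => rw [ext_apply_last, h]
  | cast j => rw [ext_apply_castSucc, hπ, hf]; simp [Fin.castSucc_castPred]

/-! ### Copies -/

/-- The canonical map of `Perm (Fin m)` onto the copy `{σ | σ (last) = i}`. -/
def psi (i : Fin (m + 1)) (π : Equiv.Perm (Fin m)) : Equiv.Perm (Fin (m + 1)) :=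
  Equiv.swap i (Fin.last m) * ext π

lemma psi_last (i : Fin (m + 1)) (π : Equiv.Perm (Fin m)) : psi i π (Fin.last m) = i := by
  simp [psi, Equiv.Perm.mul_apply, ext_apply_last]

lemma psi_injective (i : Fin (m + 1)) : Function.Injective (psi i) := by
  intro a b h
  exact ext_injective (mul_left_cancel h)

lemma psi_surj {i : Fin (m + 1)} {σ : Equiv.Perm (Fin (m + 1))} (h : σ (Fin.last m) = i) :
    ∃ π, psi i π = σ := by
  obtain ⟨π, hπ⟩ := ext_surj (σ := Equiv.swap i (Fin.last m) * σ)
    (by simp [Equiv.Perm.mul_apply, h])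
  refine ⟨π, ?_⟩
  rw [psi, hπ, ← mul_assoc, Equiv.swap_mul_self, one_mul]

lemma chain_psi {i : Fin (m + 1)} {𝒢 : Set (Equiv.Perm (Fin (m + 1)))}
    {G' : SimpleGraph (Equiv.Perm (Fin (m + 1)))}
    (hadj : ∀ g h : Equiv.Perm (Fin (m + 1)), g ≠ h → g⁻¹ * h ∈ 𝒢 → G'.Adj g h)
    (hgen : ∀ ρ ∈ genSP m, ext ρ ∈ 𝒢)
    {T : Set (Equiv.Perm (Fin (m + 1)))} {T' : Set (Equiv.Perm (Fin m))}
    (hmem : ∀ π ∈ T', psi i π ∈ T)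
    {π π' : Equiv.Perm (Fin m)} (hc : Chain (SP m) T' π π') :
    Chain G' T (psi i π) (psi i π') := by
  refine Relation.ReflTransGen.lift (psi i) ?_ _ _ hc
  rintro a b ⟨ha, hb, hne, hgenab⟩
  refine ⟨hmem a ha, hmem b hb, hadj _ _ (fun h => hne (psi_injective i h)) ?_⟩
  have : (psi i a)⁻¹ * psi i b = ext (a⁻¹ * b) := by
    rw [ext_mul, ← ext_inv]
    simp [psi, mul_assoc]
  rw [this]
  exact hgen _ hgenab

lemma genSP_ext {ρ : Equiv.Perm (Fin m)} (h : ρ ∈ genSP m) : ext ρ ∈ genSP (m + 1) := by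
  obtain ⟨i, j, rfl, hc⟩ := h
  refine ⟨i.castSucc, j.castSucc, ext_swap i j, ?_⟩
  rcases hc with ⟨h1, h2⟩ | ⟨h1, h2⟩
  · exact Or.inl ⟨by simpa using h1, fun h => h2 (Fin.castSucc_injective m h)⟩
  · exact Or.inr ⟨by simpa using h1, by simpa using h2⟩

/-! ### Counting cross edges -/

open Classical in
lemma card_perm_fix2 {m : ℕ} (hm : 1 ≤ m) :
    Fintype.card (Equiv.Perm {x : Fin (m + 1) // x ≠ Fin.last m ∧ x ≠ 0}) =
      Nat.factorial (m - 1) := by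
  rw [Fintype.card_perm]
  congr 1
  rw [Fintype.card_subtype]
  have h0 : (0 : Fin (m + 1)) ≠ Fin.last m := by
    intro h
    have := congrArg Fin.val h
    simp [Fin.last] at this
    omega
  have : Finset.filter (fun x : Fin (m + 1) => x ≠ Fin.last m ∧ x ≠ 0) Finset.univ =
      Finset.univ \ {Fin.last m, (0 : Fin (m + 1))} := by
    ext x
    simp [and_comm]
  rw [this, Finset.card_sdiff_of_subset (Finset.subset_univ _)]
  rw [Finset.card_insert_of_notMem (by simpa using h0.symm), Finset.card_singleton]
  simp

open Classical in
/-- If few vertices are deleted, there is a surviving cross edge from copies in `A`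
to copies in `B` (copies along the value at the last position, edge by `swap 0 last`). -/
lemma cross_edge {m : ℕ} (hm : 1 ≤ m) (A B : Set (Fin (m + 1))) (hd : Disjoint A B)
    (F : Set (Equiv.Perm (Fin (m + 1))))
    (hF : (F ∩ {σ | σ (Fin.last m) ∈ A ∪ B}).ncard <
      Nat.factorial (m - 1) * (A.ncard * B.ncard)) :
    ∃ σ : Equiv.Perm (Fin (m + 1)), σ ∉ F ∧ σ * Equiv.swap 0 (Fin.last m) ∉ F ∧
      σ (Fin.last m) ∈ A ∧ σ 0 ∈ B := by
  by_contra hcon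
  push_neg at hcon
  set L := Fin.last m with hL
  set Z : Fin (m + 1) := 0 with hZ
  have hLZ : L ≠ Z := by
    intro h
    have := congrArg Fin.val h
    simp [hL, hZ, Fin.last] at this
    omega
  set X : Set (Equiv.Perm (Fin (m + 1))) := {σ | σ L ∈ A ∧ σ Z ∈ B} with hX
  -- every edge indexed by X is blocked
  have hblocked : ∀ σ ∈ X, σ ∈ F ∨ σ * Equiv.swap Z L ∈ F := by
    rintro σ ⟨h1, h2⟩
    by_cases hσ : σ ∈ F
    · exact Or.inl hσ
    · right
      by_contra h3
      exact hcon σ hσ h3 h1 h2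
  -- upper bound : X injects into the blocked set
  have hup : X.ncard ≤ (F ∩ {σ | σ L ∈ A ∪ B}).ncard := by
    set f : Equiv.Perm (Fin (m + 1)) → Equiv.Perm (Fin (m + 1)) :=
      fun σ => if σ ∈ F then σ else σ * Equiv.swap Z L with hf
    have himg : f '' X ⊆ F ∩ {σ | σ L ∈ A ∪ B} := by
      rintro _ ⟨σ, hσX, rfl⟩
      by_cases hσ : σ ∈ F
      · exact ⟨by simp [hf, hσ], Or.inl (by simpa [hf, hσ] using hσX.1)⟩
      · have hb := (hblocked σ hσX).resolve_left hσ
        refine ⟨by simp [hf, hσ, hb], Or.inr ?_⟩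
        have : (σ * Equiv.swap Z L) L = σ Z := by
          simp [Equiv.Perm.mul_apply]
        simp only [hf, hσ, if_neg]
        simpa [this] using hσX.2
    have hinj : Set.InjOn f X := by
      rintro σ₁ h₁ σ₂ h₂ heq
      by_cases c1 : σ₁ ∈ F <;> by_cases c2 : σ₂ ∈ F
      · simpa [hf, c1, c2] using heq
      · exfalso
        simp only [hf, c1, c2, if_pos, if_neg] at heq
        have : σ₁ L = σ₂ Z := by rw [heq]; simp [Equiv.Perm.mul_apply]
        exact (Set.disjoint_left.mp hd (this ▸ h₁.1)) h₂.2
      · exfalso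
        simp only [hf, c1, c2, if_pos, if_neg] at heq
        have : σ₂ L = σ₁ Z := by rw [← heq]; simp [Equiv.Perm.mul_apply]
        exact (Set.disjoint_left.mp hd (this ▸ h₂.1)) h₁.2
      · simp only [hf, c1, c2, if_neg] at heq
        exact mul_right_cancel heq
    calc X.ncard = (f '' X).ncard := (Set.ncard_image_of_injOn hinj).symm
      _ ≤ _ := Set.ncard_le_ncard himg (Set.toFinite _)
  -- lower bound : X contains an injective image
  have hlow : Nat.factorial (m - 1) * (A.ncard * B.ncard) ≤ X.ncard := by
    set D := (A × B × Equiv.Perm {x : Fin (m + 1) // x ≠ L ∧ x ≠ Z}) with hD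
    set g : D → Equiv.Perm (Fin (m + 1)) := fun d =>
      (Equiv.swap (Equiv.swap L d.1.1 Z) d.2.1 * Equiv.swap L d.1.1) *
        Equiv.Perm.ofSubtype d.2.2 with hg
    have hofZ : ∀ π : Equiv.Perm {x : Fin (m + 1) // x ≠ L ∧ x ≠ Z},
        Equiv.Perm.ofSubtype π Z = Z :=
      fun π => Equiv.Perm.ofSubtype_apply_of_not_mem π (by simp)
    have hofL : ∀ π : Equiv.Perm {x : Fin (m + 1) // x ≠ L ∧ x ≠ Z},
        Equiv.Perm.ofSubtype π L = L :=
      fun π => Equiv.Perm.ofSubtype_apply_of_not_mem π (by simp)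
    have hgL : ∀ d : D, g d L = d.1.1 := by
      rintro ⟨⟨i, hi⟩, ⟨j, hj⟩, π⟩
      have hij : (i : Fin (m + 1)) ≠ j := by
        intro h
        exact (Set.disjoint_left.mp hd hi) (h ▸ hj)
      have hib : (i : Fin (m + 1)) ≠ Equiv.swap L i Z := by
        intro h
        have := (Equiv.swap L i).injective (h.symm.trans (Equiv.swap_apply_left L i).symm)
        exact hLZ this.symm
      simp only [hg, Equiv.Perm.mul_apply, hofL]
      rw [Equiv.swap_apply_left]
      exact Equiv.swap_apply_of_ne_of_ne hib hij
    have hgZ : ∀ d : D, g d Z = d.2.1 := by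
      rintro ⟨⟨i, hi⟩, ⟨j, hj⟩, π⟩
      simp only [hg, Equiv.Perm.mul_apply, hofZ]
      rw [Equiv.swap_apply_left]
    have hginj : Function.Injective g := by
      rintro ⟨⟨i, hi⟩, ⟨j, hj⟩, π⟩ ⟨⟨i', hi'⟩, ⟨j', hj'⟩, π'⟩ heq
      have hii : i = i' := by
        have := congrArg (fun σ : Equiv.Perm (Fin (m + 1)) => σ L) heq
        simpa [hgL ⟨⟨i, hi⟩, ⟨j, hj⟩, π⟩, hgL ⟨⟨i', hi'⟩, ⟨j', hj'⟩, π'⟩] using this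
      have hjj : j = j' := by
        have := congrArg (fun σ : Equiv.Perm (Fin (m + 1)) => σ Z) heq
        simpa [hgZ ⟨⟨i, hi⟩, ⟨j, hj⟩, π⟩, hgZ ⟨⟨i', hi'⟩, ⟨j', hj'⟩, π'⟩] using this
      subst hii; subst hjj
      simp only [hg] at heq
      have hππ : Equiv.Perm.ofSubtype π = Equiv.Perm.ofSubtype π' := mul_left_cancel heq
      have : π = π' := by
        apply Equiv.ext
        rintro ⟨x, hx⟩
        have h1 := Equiv.Perm.ofSubtype_apply_of_mem π hx
        have h2 := Equiv.Perm.ofSubtype_apply_of_mem π' hx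
        rw [hππ] at h1
        exact Subtype.ext (by rw [← h1, h2])
      simp [this]
    have hrange : Set.range g ⊆ X := by
      rintro _ ⟨d, rfl⟩
      exact ⟨by rw [hgL d]; exact d.1.2, by rw [hgZ d]; exact d.2.1.2⟩
    have hcardD : Nat.card D = Nat.factorial (m - 1) * (A.ncard * B.ncard) := by
      rw [hD, Nat.card_prod, Nat.card_prod, Nat.card_eq_fintype_card (α := Equiv.Perm _),
        card_perm_fix2 hm, Nat.card_coe_set_eq, Nat.card_coe_set_eq]
      ring
    calc Nat.factorial (m - 1) * (A.ncard * B.ncard)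
        = Nat.card D := hcardD.symm
      _ = (Set.range g).ncard := by
          rw [← Nat.card_range_of_injective hginj, Nat.card_coe_set_eq]
      _ ≤ X.ncard := Set.ncard_le_ncard hrange (Set.toFinite _)
  omega

/-! ### Base case: `m = 3` -/

lemma three_avoid {α : Type*} [Finite α] {F : Set α} (hF : F.ncard ≤ 2) {x y z : α}
    (hxy : x ≠ y) (hxz : x ≠ z) (hyz : y ≠ z) : x ∉ F ∨ y ∉ F ∨ z ∉ F := by
  by_contra h
  push_neg at h
  obtain ⟨hx, hy, hz⟩ := h
  have hsub : ({x, y, z} : Set α) ⊆ F := by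
    intro a ha
    rcases ha with rfl | rfl | rfl <;> assumption
  have h3 : ({x, y, z} : Set α).ncard = 3 := by
    rw [Set.ncard_insert_of_notMem (by simp [hxy, hxz]) (Set.toFinite _),
      Set.ncard_pair hyz]
  have := Set.ncard_le_ncard hsub (Set.toFinite F)
  omega

set_option synthInstance.maxSize 4000 in
lemma sp3_mul {g t : Equiv.Perm (Fin 3)} (hg1 : g ≠ 1) (hg : g ∉ genSP 3)
    (ht : t ∈ genSP 3) : t⁻¹ * g ∈ genSP 3 ∧ t⁻¹ * g ≠ 1 := by
  simp only [genSP, Set.mem_setOf_eq] at *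
  revert hg1 hg ht
  revert g t
  decide

set_option synthInstance.maxSize 4000 in
lemma sp3_swaps : Equiv.swap (0 : Fin 3) 1 ∈ genSP 3 ∧ Equiv.swap (0 : Fin 3) 2 ∈ genSP 3 ∧
    Equiv.swap (1 : Fin 3) 2 ∈ genSP 3 ∧ Equiv.swap (0 : Fin 3) 1 ≠ Equiv.swap (0 : Fin 3) 2 ∧
    Equiv.swap (0 : Fin 3) 1 ≠ Equiv.swap (1 : Fin 3) 2 ∧
    Equiv.swap (0 : Fin 3) 2 ≠ Equiv.swap (1 : Fin 3) 2 ∧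
    (∀ t : Equiv.Perm (Fin 3), t ∈ genSP 3 → t ≠ 1) := by
  simp only [genSP, Set.mem_setOf_eq]
  decide

lemma lemA_base (F : Set (Equiv.Perm (Fin 3))) (hF : F.ncard ≤ 2) :
    ∀ u v, u ∉ F → v ∉ F → Chain (SP 3) Fᶜ u v := by
  intro u v hu hv
  rcases eq_or_ne u v with rfl | huv
  · exact Relation.ReflTransGen.refl
  by_cases hg : u⁻¹ * v ∈ genSP 3
  · exact Chain.step hu hv ⟨huv, hg⟩
  have hg1 : u⁻¹ * v ≠ 1 := fun h => huv (by
    have := congrArg (u * ·) h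
    simpa [mul_assoc] using this.symm)
  obtain ⟨h01, h02, h12, d1, d2, d3, hne1⟩ := sp3_swaps
  have key : ∀ t : Equiv.Perm (Fin 3), t ∈ genSP 3 → u * t ∉ F → Chain (SP 3) Fᶜ u v := by
    intro t ht hw
    have ht1 : t ≠ 1 := hne1 t ht
    obtain ⟨hmem, hne⟩ := sp3_mul hg1 hg ht
    have adj1 : (SP 3).Adj u (u * t) := by
      refine ⟨fun h => ht1 ?_, by simpa using ht⟩
      have := congrArg (u⁻¹ * ·) h
      simpa using this.symm
    have adj2 : (SP 3).Adj (u * t) v := by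
      refine ⟨fun h => hne ?_, ?_⟩
      · rw [← h]; group
      · have : (u * t)⁻¹ * v = t⁻¹ * (u⁻¹ * v) := by group
        rw [this]; exact hmem
    exact (Chain.step (T := Fᶜ) hu hw adj1).trans (Chain.step (T := Fᶜ) hw hv adj2)
  rcases three_avoid hF (z := u * Equiv.swap (1 : Fin 3) 2)
      (x := u * Equiv.swap (0 : Fin 3) 1) (y := u * Equiv.swap (0 : Fin 3) 2)
      (by simpa using d1) (by simpa using d2) (by simpa using d3) with h | h | h
  · exact key _ h01 h
  · exact key _ h02 h
  · exact key _ h12 h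

/-! ### Generator membership helpers -/

lemma swap0L_mem_genSP {M : ℕ} (hM : 1 ≤ M) :
    Equiv.swap (0 : Fin (M + 1)) (Fin.last M) ∈ genSP (M + 1) := by
  refine ⟨0, Fin.last M, rfl, Or.inl ⟨by simp, ?_⟩⟩
  intro h
  have := congrArg Fin.val h
  simp [Fin.last] at this
  omega

lemma swapPM_mem_genSP {M : ℕ} (hM : 2 ≤ M) :
    Equiv.swap (⟨M - 1, by omega⟩ : Fin (M + 1)) (Fin.last M) ∈ genSP (M + 1) := by
  refine ⟨⟨M - 1, by omega⟩, Fin.last M, rfl, Or.inr ⟨?_, ?_⟩⟩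
  · simp [Fin.last]; omega
  · simp; omega

lemma swap_cross_ne {M : ℕ} (hM : 2 ≤ M) :
    Equiv.swap (0 : Fin (M + 1)) (Fin.last M) ≠
      Equiv.swap (⟨M - 1, by omega⟩ : Fin (M + 1)) (Fin.last M) := by
  intro h
  have h0L : (0 : Fin (M + 1)) ≠ Fin.last M := by
    intro hh; have := congrArg Fin.val hh; simp [Fin.last] at this; omega
  have h0P : (0 : Fin (M + 1)) ≠ ⟨M - 1, by omega⟩ := by
    intro hh; have := congrArg Fin.val hh; simp at this; omega
  have := congrArg (fun s : Equiv.Perm (Fin (M + 1)) => s 0) h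
  simp only [Equiv.swap_apply_left] at this
  rw [Equiv.swap_apply_of_ne_of_ne h0P h0L] at this
  exact h0L this.symm

lemma swap_ne_one {M : ℕ} {a b : Fin M} (h : a ≠ b) : Equiv.swap a b ≠ 1 := by
  intro hh
  have := congrArg (fun s : Equiv.Perm (Fin M) => s a) hh
  simp at this
  exact h this.symm

lemma mul_swap_adj {M : ℕ} {G : SimpleGraph (Equiv.Perm (Fin M))}
    {𝒢 : Set (Equiv.Perm (Fin M))}
    (hadj : ∀ g h : Equiv.Perm (Fin M), g ≠ h → g⁻¹ * h ∈ 𝒢 → G.Adj g h)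
    {a b : Fin M} (hab : a ≠ b) (hmem : Equiv.swap a b ∈ 𝒢) (u : Equiv.Perm (Fin M)) :
    G.Adj u (u * Equiv.swap a b) := by
  refine hadj _ _ (fun h => swap_ne_one hab ?_) (by simp [mul_assoc]; exact hmem)
  have := congrArg (u⁻¹ * ·) h
  simpa using this.symm

/-! ### Transfer of connectivity into a copy -/

lemma intra_copy {M : ℕ}
    (IH : ∀ F : Set (Equiv.Perm (Fin M)), F.ncard ≤ 2 * M - 4 →
      ∀ u v, u ∉ F → v ∉ F → Chain (SP M) Fᶜ u v)
    {𝒢 : Set (Equiv.Perm (Fin (M + 1)))} {G' : SimpleGraph (Equiv.Perm (Fin (M + 1)))}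
    (hadj : ∀ g h : Equiv.Perm (Fin (M + 1)), g ≠ h → g⁻¹ * h ∈ 𝒢 → G'.Adj g h)
    (hgen : ∀ ρ ∈ genSP M, ext ρ ∈ 𝒢)
    (F : Set (Equiv.Perm (Fin (M + 1)))) (i : Fin (M + 1))
    (hFi : (F ∩ {σ | σ (Fin.last M) = i}).ncard ≤ 2 * M - 4)
    (T : Set (Equiv.Perm (Fin (M + 1)))) (hT : ∀ σ, σ ∉ F → σ (Fin.last M) = i → σ ∈ T) :
    ∀ u v, u ∉ F → v ∉ F → u (Fin.last M) = i → v (Fin.last M) = i → Chain G' T u v := by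
  intro u v hu hv hui hvi
  set F' : Set (Equiv.Perm (Fin M)) := psi i ⁻¹' F with hF'
  have hF'card : F'.ncard ≤ 2 * M - 4 := by
    have himg : psi i '' F' ⊆ F ∩ {σ | σ (Fin.last M) = i} := by
      rintro _ ⟨π, hπ, rfl⟩
      exact ⟨hπ, psi_last i π⟩
    calc F'.ncard = (psi i '' F').ncard :=
          (Set.ncard_image_of_injective _ (psi_injective i)).symm
      _ ≤ _ := Set.ncard_le_ncard himg (Set.toFinite _)
      _ ≤ 2 * M - 4 := hFi
  obtain ⟨πu, hπu⟩ := psi_surj hui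
  obtain ⟨πv, hπv⟩ := psi_surj hvi
  have hπuF : πu ∉ F' := by rw [hF', Set.mem_preimage, hπu]; exact hu
  have hπvF : πv ∉ F' := by rw [hF', Set.mem_preimage, hπv]; exact hv
  have hchain := IH F' hF'card πu πv hπuF hπvF
  have := chain_psi (i := i) hadj hgen
    (T := T) (T' := F'ᶜ) (fun π hπ => hT _ hπ (psi_last i π)) hchain
  rwa [hπu, hπv] at this

lemma fact_ge_two {M : ℕ} (h : 3 ≤ M) : 2 ≤ (M - 1).factorial := by
  calc 2 = Nat.factorial 2 := rfl
    _ ≤ (M - 1).factorial := Nat.factorial_le (by omega)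

lemma ab_bound {a b s : ℕ} (ha : 1 ≤ a) (hb : 1 ≤ b) (hab : a + b = s) : s - 1 ≤ a * b := by
  obtain ⟨a', rfl⟩ : ∃ a', a = a' + 1 := ⟨a - 1, by omega⟩
  obtain ⟨b', rfl⟩ : ∃ b', b = b' + 1 := ⟨b - 1, by omega⟩
  have : (a' + 1) * (b' + 1) = a' * b' + a' + b' + 1 := by ring
  omega

/-! ### The connectivity of the star-path graph -/

lemma lemA : ∀ M, 3 ≤ M → ∀ F : Set (Equiv.Perm (Fin M)), F.ncard ≤ 2 * M - 4 →
    ∀ u v, u ∉ F → v ∉ F → Chain (SP M) Fᶜ u v := by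
  intro M hM
  induction M, hM using Nat.le_induction with
  | base => exact fun F hF => lemA_base F (by omega)
  | succ M hM IH =>
    intro F hF u v hu hv
    set L := Fin.last M with hLdef
    have hadj : ∀ g h : Equiv.Perm (Fin (M + 1)), g ≠ h → g⁻¹ * h ∈ genSP (M + 1) →
        (SP (M + 1)).Adj g h := fun g h h1 h2 => ⟨h1, h2⟩
    have hFf : F.ncard ≤ 2 * M - 2 := by omega
    have hswap0L := swap0L_mem_genSP (M := M) (by omega)
    have h0L : (0 : Fin (M + 1)) ≠ L := by
      intro hh; have := congrArg Fin.val hh; simp [hLdef, Fin.last] at this; omega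
    have hcopyval : ∀ σ : Equiv.Perm (Fin (M + 1)), (σ * Equiv.swap 0 L) L = σ 0 := by
      intro σ; simp [Equiv.Perm.mul_apply]
    by_cases hbad : ∃ i₀ : Fin (M + 1), 2 * M - 3 ≤ (F ∩ {σ | σ L = i₀}).ncard
    · -- one bad copy, contains almost all of F
      obtain ⟨i₀, hi₀⟩ := hbad
      have hrest : (F \ {σ | σ L = i₀}).ncard ≤ 1 := by
        have := Set.ncard_inter_add_ncard_diff_eq_ncard F {σ | σ L = i₀} (Set.toFinite F)
        omega
      set Tg : Set (Equiv.Perm (Fin (M + 1))) := Fᶜ ∩ {σ | σ L ≠ i₀} with hTgdef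
      have hTgsub : Tg ⊆ Fᶜ := Set.inter_subset_left
      have hT : ∀ σ ∈ Tg, σ L ∈ {i : Fin (M + 1) | i ≠ i₀} := fun σ hσ => hσ.2
      have intra : ∀ i ∈ {i : Fin (M + 1) | i ≠ i₀}, ∀ a b : Equiv.Perm (Fin (M + 1)),
          a ∈ Tg → b ∈ Tg → a L = i → b L = i → Chain (SP (M + 1)) Tg a b := by
        intro i hi a b ha hb hai hbi
        refine intra_copy IH hadj (fun ρ hρ => genSP_ext hρ) F i ?_ Tg
          (fun σ hσ hσi => ⟨hσ, by show σ L ≠ i₀; rw [show σ L = i from hσi]; exact hi⟩)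
          a b ha.1 hb.1 hai hbi
        rw [← hLdef]
        have hsub : F ∩ {σ | σ L = i} ⊆ F \ {σ | σ L = i₀} := by
          rintro σ ⟨h1, h2⟩
          exact ⟨h1, fun hh => hi (by rw [← h2, hh])⟩
        have := Set.ncard_le_ncard hsub (Set.toFinite _)
        omega
      have cross : ∀ A : Set (Fin (M + 1)), A ⊆ {i | i ≠ i₀} →
          (∃ a ∈ Tg, a L ∈ A) → (∃ b ∈ Tg, b L ∈ {i | i ≠ i₀} ∧ b L ∉ A) →
          ∃ a b : Equiv.Perm (Fin (M + 1)), a ∈ Tg ∧ b ∈ Tg ∧ a L ∈ A ∧ b L ∉ A ∧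
            (SP (M + 1)).Adj a b := by
        intro A hA ⟨a0, ha0T, ha0A⟩ ⟨b0, hb0T, hb0I, hb0A⟩
        set B : Set (Fin (M + 1)) := {i | i ≠ i₀} \ A with hBdef
        have hcount : (F ∩ {σ | σ L ∈ A ∪ B}).ncard <
            (M - 1).factorial * (A.ncard * B.ncard) := by
          have hsub : F ∩ {σ | σ L ∈ A ∪ B} ⊆ F \ {σ | σ L = i₀} := by
            rintro σ ⟨h1, h2⟩
            refine ⟨h1, fun hh => ?_⟩
            rcases h2 with h2 | h2
            · exact hA h2 hh
            · exact h2.1 hh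
          have h1 := Set.ncard_le_ncard hsub (Set.toFinite _)
          have hA1 : 1 ≤ A.ncard := (Set.ncard_pos (Set.toFinite _)).mpr ⟨_, ha0A⟩
          have hB1 : 1 ≤ B.ncard := (Set.ncard_pos (Set.toFinite _)).mpr ⟨_, hb0I, hb0A⟩
          have hf2 := fact_ge_two (M := M) (by omega)
          have hab : 1 * 1 ≤ A.ncard * B.ncard := Nat.mul_le_mul hA1 hB1
          have h2 : 2 * (1 * 1) ≤ (M - 1).factorial * (A.ncard * B.ncard) :=
            Nat.mul_le_mul hf2 hab
          omega
        obtain ⟨σ, hσF, hσsF, hσA, hσB⟩ := cross_edge (by omega) A B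
          disjoint_sdiff_self_right F hcount
        refine ⟨σ, σ * Equiv.swap 0 L, ⟨hσF, hA hσA⟩, ⟨hσsF, ?_⟩, hσA, ?_, ?_⟩
        · show (σ * Equiv.swap 0 L) L ≠ i₀
          rw [hcopyval σ]; exact hσB.1
        · show (σ * Equiv.swap 0 L) L ∉ A
          rw [hcopyval σ]; exact hσB.2
        · exact mul_swap_adj hadj h0L hswap0L σ
      have hglue := glue (c := fun σ : Equiv.Perm (Fin (M + 1)) => σ L) hT intra cross
      -- rescue out of the bad copy
      have rescue : ∀ w, w ∉ F → ∃ w', w' ∈ Tg ∧ Chain (SP (M + 1)) Fᶜ w w' := by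
        intro w hw
        by_cases hwc : w L = i₀
        · set pM : Fin (M + 1) := ⟨M - 1, by omega⟩ with hpM
          set w₁ := w * Equiv.swap 0 L with hw₁
          set w₂ := w * Equiv.swap pM L with hw₂
          have hpML : pM ≠ L := by
            intro hh; have := congrArg Fin.val hh; simp [hpM, hLdef, Fin.last] at this; omega
          have h12 : w₁ ≠ w₂ := by
            intro hh
            exact swap_cross_ne (M := M) (by omega) (mul_left_cancel hh)
          have hw₁L : w₁ L ≠ i₀ := by
            rw [hw₁, hcopyval, ← hwc]
            exact fun hh => h0L (w.injective hh)
          have hw₂L : w₂ L ≠ i₀ := by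
            have : w₂ L = w pM := by simp [hw₂, Equiv.Perm.mul_apply]
            rw [this, ← hwc]
            exact fun hh => hpML (w.injective hh)
          have hnotboth : w₁ ∉ F ∨ w₂ ∉ F := by
            by_contra hh
            push_neg at hh
            have hsub : ({w₁, w₂} : Set _) ⊆ F \ {σ | σ L = i₀} := by
              rintro x (rfl | rfl)
              · exact ⟨hh.1, hw₁L⟩
              · exact ⟨hh.2, hw₂L⟩
            have := Set.ncard_le_ncard hsub (Set.toFinite _)
            rw [Set.ncard_pair h12] at this
            omega
          rcases hnotboth with hgood | hgood
          · exact ⟨w₁, ⟨hgood, hw₁L⟩,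
              Chain.step (T := Fᶜ) hw hgood (mul_swap_adj hadj h0L hswap0L w)⟩
          · refine ⟨w₂, ⟨hgood, hw₂L⟩,
              Chain.step (T := Fᶜ) hw hgood (mul_swap_adj hadj hpML ?_ w)⟩
            exact swapPM_mem_genSP (by omega)
        · exact ⟨w, ⟨hw, hwc⟩, Relation.ReflTransGen.refl⟩
      obtain ⟨u', hu'T, hcu⟩ := rescue u hu
      obtain ⟨v', hv'T, hcv⟩ := rescue v hv
      exact (hcu.trans ((hglue u' v' hu'T hv'T).mono hTgsub)).trans hcv.symm
    · -- all copies are good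
      push_neg at hbad
      have hT : ∀ σ ∈ (Fᶜ : Set _), σ L ∈ (Set.univ : Set (Fin (M + 1))) :=
        fun σ _ => Set.mem_univ _
      have intra : ∀ i ∈ (Set.univ : Set (Fin (M + 1))), ∀ a b : Equiv.Perm (Fin (M + 1)),
          a ∈ Fᶜ → b ∈ Fᶜ → a L = i → b L = i → Chain (SP (M + 1)) Fᶜ a b := by
        intro i _ a b ha hb hai hbi
        refine intra_copy IH hadj (fun ρ hρ => genSP_ext hρ) F i ?_ Fᶜ
          (fun σ hσ _ => hσ) a b ha hb hai hbi
        rw [← hLdef]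
        have := hbad i
        omega
      have cross : ∀ A : Set (Fin (M + 1)), A ⊆ Set.univ →
          (∃ a ∈ (Fᶜ : Set _), a L ∈ A) →
          (∃ b ∈ (Fᶜ : Set _), b L ∈ Set.univ ∧ b L ∉ A) →
          ∃ a b : Equiv.Perm (Fin (M + 1)), a ∈ Fᶜ ∧ b ∈ Fᶜ ∧ a L ∈ A ∧ b L ∉ A ∧
            (SP (M + 1)).Adj a b := by
        intro A hA ⟨a0, ha0T, ha0A⟩ ⟨b0, hb0T, _, hb0A⟩
        set B : Set (Fin (M + 1)) := Aᶜ with hBdef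
        have hcount : (F ∩ {σ | σ L ∈ A ∪ B}).ncard <
            (M - 1).factorial * (A.ncard * B.ncard) := by
          have h1 : (F ∩ {σ | σ L ∈ A ∪ B}).ncard ≤ F.ncard :=
            Set.ncard_le_ncard Set.inter_subset_left (Set.toFinite _)
          have hA1 : 1 ≤ A.ncard := (Set.ncard_pos (Set.toFinite _)).mpr ⟨_, ha0A⟩
          have hB1 : 1 ≤ B.ncard := (Set.ncard_pos (Set.toFinite _)).mpr ⟨_, hb0A⟩
          have hsum : A.ncard + B.ncard = M + 1 := by
            rw [hBdef, Set.ncard_add_ncard_compl]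
            simp [Nat.card_eq_fintype_card]
          have hab : M + 1 - 1 ≤ A.ncard * B.ncard := ab_bound hA1 hB1 hsum
          have hf2 := fact_ge_two (M := M) (by omega)
          have h2 : 2 * (M + 1 - 1) ≤ (M - 1).factorial * (A.ncard * B.ncard) :=
            Nat.mul_le_mul hf2 hab
          omega
        obtain ⟨σ, hσF, hσsF, hσA, hσB⟩ := cross_edge (by omega) A B
          (disjoint_compl_right) F hcount
        refine ⟨σ, σ * Equiv.swap 0 L, hσF, hσsF, hσA, ?_, ?_⟩
        · show (σ * Equiv.swap 0 L) L ∉ A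
          rw [hcopyval σ]; exact hσB
        · exact mul_swap_adj hadj h0L hswap0L σ
      exact glue (c := fun σ : Equiv.Perm (Fin (M + 1)) => σ L) hT intra cross u v hu hv

/-! ### The CW graph -/

lemma genSP_ext_cw {M : ℕ} {ρ : Equiv.Perm (Fin M)} (h : ρ ∈ genSP M) :
    ext ρ ∈ cwGen (M + 1) := by
  obtain ⟨i, j, rfl, hc⟩ := h
  refine ⟨i.castSucc, j.castSucc, ext_swap i j, ?_⟩
  rcases hc with ⟨h1, h2⟩ | ⟨h1, h2⟩
  · exact Or.inl ⟨by simpa using h1, fun h => h2 (Fin.castSucc_injective M h)⟩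
  · exact Or.inr (Or.inl ⟨by simpa using h1, by simpa using h2⟩)

lemma swap0L_mem_cwGen {M : ℕ} (hM : 1 ≤ M) :
    Equiv.swap (0 : Fin (M + 1)) (Fin.last M) ∈ cwGen (M + 1) := by
  refine ⟨0, Fin.last M, rfl, Or.inl ⟨by simp, ?_⟩⟩
  intro h
  have := congrArg Fin.val h
  simp [Fin.last] at this
  omega

lemma swap1L_mem_cwGen {M : ℕ} (hM : 2 ≤ M) :
    Equiv.swap (⟨1, by omega⟩ : Fin (M + 1)) (Fin.last M) ∈ cwGen (M + 1) := by
  exact ⟨⟨1, by omega⟩, Fin.last M, rfl, Or.inr (Or.inr ⟨rfl, by simp [Fin.last]⟩)⟩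

/-- Main chain lemma: removing at most `2(M+1) - 5` vertices from `CW (M+1)` minus
the copy `k` leaves everything chain-connected. -/
lemma main_chain {M : ℕ} (hM : 3 ≤ M) (k : Fin (M + 1))
    (F : Set (Equiv.Perm (Fin (M + 1)))) (hFsub : ∀ σ ∈ F, σ (Fin.last M) ≠ k)
    (hF : F.ncard ≤ 2 * (M + 1) - 5) :
    ∀ u v, u (Fin.last M) ≠ k → v (Fin.last M) ≠ k → u ∉ F → v ∉ F →
      Chain (CW (M + 1)) ({σ | σ (Fin.last M) ≠ k} \ F) u v := by
  intro u v huk hvk hu hv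
  set L := Fin.last M with hLdef
  set T : Set (Equiv.Perm (Fin (M + 1))) := {σ | σ L ≠ k} \ F with hTdef
  have huT : u ∈ T := ⟨huk, hu⟩
  have hvT : v ∈ T := ⟨hvk, hv⟩
  have hadj : ∀ g h : Equiv.Perm (Fin (M + 1)), g ≠ h → g⁻¹ * h ∈ cwGen (M + 1) →
      (CW (M + 1)).Adj g h := fun g h h1 h2 => ⟨h1, h2⟩
  have hFf : F.ncard ≤ 2 * M - 3 := by omega
  have hswap0L := swap0L_mem_cwGen (M := M) (by omega)
  have h0L : (0 : Fin (M + 1)) ≠ L := by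
    intro hh; have := congrArg Fin.val hh; simp [hLdef, Fin.last] at this; omega
  have hcopyval : ∀ σ : Equiv.Perm (Fin (M + 1)), (σ * Equiv.swap 0 L) L = σ 0 := by
    intro σ; simp [Equiv.Perm.mul_apply]
  have IH := lemA M hM
  by_cases hbad : ∃ i₀ : Fin (M + 1), 2 * M - 3 ≤ (F ∩ {σ | σ L = i₀}).ncard
  · -- all of F lives in a single copy i₀
    obtain ⟨i₀, hi₀⟩ := hbad
    have hrest : (F \ {σ | σ L = i₀}).ncard = 0 := by
      have := Set.ncard_inter_add_ncard_diff_eq_ncard F {σ | σ L = i₀} (Set.toFinite F)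
      omega
    have hFcopy : ∀ σ ∈ F, σ L = i₀ := by
      intro σ hσ
      by_contra hh
      have : σ ∈ F \ {σ | σ L = i₀} := ⟨hσ, hh⟩
      have hne : (F \ {σ | σ L = i₀}).Nonempty := ⟨σ, this⟩
      rw [← Set.ncard_pos (Set.toFinite _)] at hne
      omega
    have hi₀k : i₀ ≠ k := by
      have hpos : 0 < (F ∩ {σ | σ L = i₀}).ncard := by omega
      obtain ⟨σ, hσF, hσL⟩ := (Set.ncard_pos (Set.toFinite _)).mp hpos
      exact hσL ▸ hFsub σ hσF
    set Tg : Set (Equiv.Perm (Fin (M + 1))) := {σ | σ L ≠ k ∧ σ L ≠ i₀} with hTgdef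
    have hTgsub : Tg ⊆ T := by
      rintro σ ⟨h1, h2⟩
      exact ⟨h1, fun hσF => h2 (hFcopy σ hσF)⟩
    set I' : Set (Fin (M + 1)) := {i | i ≠ k ∧ i ≠ i₀} with hI'def
    have hT : ∀ σ ∈ Tg, σ L ∈ I' := fun σ hσ => hσ
    have intra : ∀ i ∈ I', ∀ a b : Equiv.Perm (Fin (M + 1)),
        a ∈ Tg → b ∈ Tg → a L = i → b L = i → Chain (CW (M + 1)) Tg a b := by
      intro i hi a b ha hb hai hbi
      have haF : a ∉ F := fun hh => ha.2 (hFcopy a hh)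
      have hbF : b ∉ F := fun hh => hb.2 (hFcopy b hh)
      refine intra_copy IH hadj (fun ρ hρ => genSP_ext_cw hρ) F i ?_ Tg
        (fun σ hσ hσi => by
          rw [hTgdef]
          exact ⟨by rw [show σ L = i from hσi]; exact hi.1,
            by rw [show σ L = i from hσi]; exact hi.2⟩)
        a b haF hbF hai hbi
      rw [← hLdef]
      have hsub : F ∩ {σ | σ L = i} ⊆ F \ {σ | σ L = i₀} := by
        rintro σ ⟨h1, h2⟩
        exact ⟨h1, fun hh => hi.2 (by rw [← h2, hh])⟩
      have := Set.ncard_le_ncard hsub (Set.toFinite _)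
      omega
    have cross : ∀ A : Set (Fin (M + 1)), A ⊆ I' →
        (∃ a ∈ Tg, a L ∈ A) → (∃ b ∈ Tg, b L ∈ I' ∧ b L ∉ A) →
        ∃ a b : Equiv.Perm (Fin (M + 1)), a ∈ Tg ∧ b ∈ Tg ∧ a L ∈ A ∧ b L ∉ A ∧
          (CW (M + 1)).Adj a b := by
      intro A hA ⟨a0, ha0T, ha0A⟩ ⟨b0, hb0T, hb0I, hb0A⟩
      set B : Set (Fin (M + 1)) := I' \ A with hBdef
      have hcount : (F ∩ {σ | σ L ∈ A ∪ B}).ncard <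
          (M - 1).factorial * (A.ncard * B.ncard) := by
        have hzero : (F ∩ {σ | σ L ∈ A ∪ B}).ncard = 0 := by
          have hsub : F ∩ {σ | σ L ∈ A ∪ B} ⊆ F \ {σ | σ L = i₀} := by
            rintro σ ⟨h1, h2⟩
            refine ⟨h1, fun hh => ?_⟩
            rcases h2 with h2 | h2
            · exact (hA h2).2 hh
            · exact h2.1.2 hh
          have := Set.ncard_le_ncard hsub (Set.toFinite _)
          omega
        have hA1 : 1 ≤ A.ncard := (Set.ncard_pos (Set.toFinite _)).mpr ⟨_, ha0A⟩
        have hB1 : 1 ≤ B.ncard := (Set.ncard_pos (Set.toFinite _)).mpr ⟨_, hb0I, hb0A⟩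
        have hf1 : 1 ≤ (M - 1).factorial := Nat.factorial_pos _
        have h2 : 1 * (1 * 1) ≤ (M - 1).factorial * (A.ncard * B.ncard) :=
          Nat.mul_le_mul hf1 (Nat.mul_le_mul hA1 hB1)
        omega
      obtain ⟨σ, hσF, hσsF, hσA, hσB⟩ := cross_edge (by omega) A B
        disjoint_sdiff_self_right F hcount
      refine ⟨σ, σ * Equiv.swap 0 L, ⟨(hA hσA).1, (hA hσA).2⟩, ?_, hσA, ?_, ?_⟩
      · rw [hTgdef]
        constructor
        · rw [hcopyval σ]; exact hσB.1.1
        · rw [hcopyval σ]; exact hσB.1.2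
      · show (σ * Equiv.swap 0 L) L ∉ A
        rw [hcopyval σ]; exact hσB.2
      · exact mul_swap_adj hadj h0L hswap0L σ
    have hglue := glue (c := fun σ : Equiv.Perm (Fin (M + 1)) => σ L) hT intra cross
    have rescue : ∀ w, w ∈ T → ∃ w', w' ∈ Tg ∧ Chain (CW (M + 1)) T w w' := by
      rintro w ⟨hwk, hwF⟩
      by_cases hwc : w L = i₀
      · set P1 : Fin (M + 1) := ⟨1, by omega⟩ with hP1
        have hP1L : P1 ≠ L := by
          intro hh; have := congrArg Fin.val hh; simp [hP1, hLdef, Fin.last] at this; omega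
        have key : ∀ p : Fin (M + 1), p ≠ L → w p ≠ k →
            Equiv.swap p L ∈ cwGen (M + 1) → ∃ w', w' ∈ Tg ∧ Chain (CW (M + 1)) T w w' := by
          intro p hpL hpk hgen
          set w' := w * Equiv.swap p L with hw'
          have hw'L : w' L = w p := by simp [hw', Equiv.Perm.mul_apply]
          have hw'i₀ : w' L ≠ i₀ := by
            rw [hw'L, ← hwc]
            exact fun hh => hpL (w.injective hh)
          have hw'F : w' ∉ F := fun hh => hw'i₀ (hFcopy w' hh)
          have hw'T : w' ∈ T := ⟨by show w' L ≠ k; rw [hw'L]; exact hpk, hw'F⟩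
          exact ⟨w', ⟨by show w' L ≠ k; rw [hw'L]; exact hpk, hw'i₀⟩,
            Chain.step (T := T) ⟨hwk, hwF⟩ hw'T (mul_swap_adj hadj hpL hgen w)⟩
        by_cases h0 : w 0 ≠ k
        · exact key 0 h0L h0 hswap0L
        · push_neg at h0
          refine key P1 hP1L ?_ (swap1L_mem_cwGen (by omega))
          intro hh
          have h01 : (0 : Fin (M + 1)) = P1 := w.injective (h0.trans hh.symm)
          have := congrArg Fin.val h01
          simp [hP1] at this
      · exact ⟨w, ⟨hwk, hwc⟩, Relation.ReflTransGen.refl⟩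
    obtain ⟨u', hu'T, hcu⟩ := rescue u huT
    obtain ⟨v', hv'T, hcv⟩ := rescue v hvT
    exact (hcu.trans ((hglue u' v' hu'T hv'T).mono hTgsub)).trans hcv.symm
  · -- all copies good
    push_neg at hbad
    set I' : Set (Fin (M + 1)) := {i | i ≠ k} with hI'def
    have hT : ∀ σ ∈ T, σ L ∈ I' := fun σ hσ => hσ.1
    have intra : ∀ i ∈ I', ∀ a b : Equiv.Perm (Fin (M + 1)),
        a ∈ T → b ∈ T → a L = i → b L = i → Chain (CW (M + 1)) T a b := by
      intro i hi a b ha hb hai hbi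
      refine intra_copy IH hadj (fun ρ hρ => genSP_ext_cw hρ) F i ?_ T
        (fun σ hσ hσi => ⟨by show σ L ≠ k; rw [show σ L = i from hσi]; exact hi, hσ⟩)
        a b ha.2 hb.2 hai hbi
      rw [← hLdef]
      have := hbad i
      omega
    have cross : ∀ A : Set (Fin (M + 1)), A ⊆ I' →
        (∃ a ∈ T, a L ∈ A) → (∃ b ∈ T, b L ∈ I' ∧ b L ∉ A) →
        ∃ a b : Equiv.Perm (Fin (M + 1)), a ∈ T ∧ b ∈ T ∧ a L ∈ A ∧ b L ∉ A ∧
          (CW (M + 1)).Adj a b := by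
      intro A hA ⟨a0, ha0T, ha0A⟩ ⟨b0, hb0T, hb0I, hb0A⟩
      set B : Set (Fin (M + 1)) := I' \ A with hBdef
      have hcount : (F ∩ {σ | σ L ∈ A ∪ B}).ncard <
          (M - 1).factorial * (A.ncard * B.ncard) := by
        have h1 : (F ∩ {σ | σ L ∈ A ∪ B}).ncard ≤ F.ncard :=
          Set.ncard_le_ncard Set.inter_subset_left (Set.toFinite _)
        have hA1 : 1 ≤ A.ncard := (Set.ncard_pos (Set.toFinite _)).mpr ⟨_, ha0A⟩
        have hB1 : 1 ≤ B.ncard := (Set.ncard_pos (Set.toFinite _)).mpr ⟨_, hb0I, hb0A⟩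
        have hI'card : I'.ncard = M := by
          have : I' = ({k} : Set (Fin (M + 1)))ᶜ := by
            ext i; simp [hI'def]
          rw [this]
          have hcompl := Set.ncard_add_ncard_compl ({k} : Set (Fin (M + 1)))
          rw [Set.ncard_singleton] at hcompl
          have : Nat.card (Fin (M + 1)) = M + 1 := by
            simp [Nat.card_eq_fintype_card]
          omega
        have hsum : B.ncard + A.ncard = M := by
          rw [hBdef, Set.ncard_diff_add_ncard_of_subset hA, hI'card]
        have hab : M - 1 ≤ A.ncard * B.ncard := ab_bound hA1 hB1 (by omega)
        have hf2 := fact_ge_two (M := M) (by omega)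
        have h2 : 2 * (M - 1) ≤ (M - 1).factorial * (A.ncard * B.ncard) :=
          Nat.mul_le_mul hf2 hab
        omega
      obtain ⟨σ, hσF, hσsF, hσA, hσB⟩ := cross_edge (by omega) A B
        disjoint_sdiff_self_right F hcount
      refine ⟨σ, σ * Equiv.swap 0 L, ⟨hA hσA, hσF⟩, ⟨?_, hσsF⟩, hσA, ?_, ?_⟩
      · show (σ * Equiv.swap 0 L) L ≠ k
        rw [hcopyval σ]; exact hσB.1
      · show (σ * Equiv.swap 0 L) L ∉ A
        rw [hcopyval σ]; exact hσB.2
      · exact mul_swap_adj hadj h0L hswap0L σ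
    exact glue (c := fun σ : Equiv.Perm (Fin (M + 1)) => σ L) hT intra cross u v huT hvT

/-! ### Vertex counting -/

lemma copy_card {M : ℕ} (hM : 1 ≤ M) (k : Fin (M + 1)) :
    M.factorial ≤ {σ : Equiv.Perm (Fin (M + 1)) | σ (Fin.last M) ≠ k}.ncard := by
  have h0L : (0 : Fin (M + 1)) ≠ Fin.last M := by
    intro hh; have := congrArg Fin.val hh; simp [Fin.last] at this; omega
  obtain ⟨j₀, hj₀⟩ : ∃ j₀ : Fin (M + 1), j₀ ≠ k := by
    by_cases h : k = Fin.last M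
    · exact ⟨0, fun hh => h0L (hh.trans h)⟩
    · exact ⟨Fin.last M, fun hh => h (hh.symm)⟩
  have hrange : Set.range (psi j₀) ⊆ {σ : Equiv.Perm (Fin (M + 1)) | σ (Fin.last M) ≠ k} := by
    rintro _ ⟨π, rfl⟩
    show psi j₀ π (Fin.last M) ≠ k
    rw [psi_last]
    exact hj₀
  calc M.factorial = Nat.card (Equiv.Perm (Fin M)) := by
        simp [Nat.card_eq_fintype_card, Fintype.card_perm]
    _ = (Set.range (psi j₀)).ncard := by
        rw [← Nat.card_range_of_injective (psi_injective j₀), Nat.card_coe_set_eq]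
    _ ≤ _ := Set.ncard_le_ncard hrange (Set.toFinite _)

lemma fact_lin : ∀ M, 3 ≤ M → 2 * M - 1 ≤ M.factorial := by
  intro M hM
  induction M, hM using Nat.le_induction with
  | base => decide
  | succ M hM IH =>
    rw [Nat.factorial_succ]
    have h4 : 4 ≤ M + 1 := by omega
    have := Nat.mul_le_mul h4 IH
    omega

/-! ### From chains to reachability in the doubly induced graph -/

lemma chain_reach {n : ℕ} {G : SimpleGraph (Equiv.Perm (Fin n))}
    {P : Set (Equiv.Perm (Fin n))} {S : Set ↥P} {a b : Equiv.Perm (Fin n)}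
    (hc : Chain G (P \ (Subtype.val '' S)) a b) :
    ∀ (haP : a ∈ P) (haS : (⟨a, haP⟩ : ↥P) ∉ (S : Set ↥P)) (hbP : b ∈ P)
      (hbS : (⟨b, hbP⟩ : ↥P) ∉ S),
      ((G.induce P).induce (Sᶜ)).Reachable ⟨⟨a, haP⟩, haS⟩ ⟨⟨b, hbP⟩, hbS⟩ := by
  induction hc with
  | refl =>
      intro haP haS hbP hbS
      rfl
  | tail hr hstep ih =>
      intro haP haS hbP hbS
      obtain ⟨hx, hy, hadj⟩ := hstep
      have hxP : _ ∈ P := hx.1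
      have hxS : (⟨_, hxP⟩ : ↥P) ∉ S := fun hs => hx.2 ⟨_, hs, rfl⟩
      refine (ih haP haS hxP hxS).trans ?_
      exact SimpleGraph.Adj.reachable hadj

end CWP

open CWP in
/-- For n ≥ 4 and any index k, the subgraph of CW_n induced by the vertices outside the
copy CW_n^k has vertex connectivity at least 2n − 4. -/
theorem stmt5 (n : ℕ) (hn : 4 ≤ n) (k : Fin n) :
    2 * n - 4 ≤ kappa ((CW n).induce {σ : Equiv.Perm (Fin n) | σ ⟨n - 1, by omega⟩ ≠ k}) := by
  obtain ⟨M, rfl⟩ : ∃ M, n = M + 1 := ⟨n - 1, by omega⟩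
  have hM : 3 ≤ M := by omega
  set P : Set (Equiv.Perm (Fin (M + 1))) :=
    {σ : Equiv.Perm (Fin (M + 1)) | σ ⟨M + 1 - 1, by omega⟩ ≠ k} with hPdef
  have hPlast : P = {σ : Equiv.Perm (Fin (M + 1)) | σ (Fin.last M) ≠ k} := rfl
  refine le_csInf ⟨(Set.univ : Set ↥P).ncard, Set.univ, rfl, Or.inr (by simp)⟩ ?_
  rintro b ⟨S, rfl, hcase⟩
  by_contra hlt
  push_neg at hlt
  have hS : S.ncard ≤ 2 * (M + 1) - 5 := by omega
  set F : Set (Equiv.Perm (Fin (M + 1))) := Subtype.val '' S with hFdef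
  have hFcard : F.ncard = S.ncard := Set.ncard_image_of_injective S Subtype.val_injective
  have hFsub : ∀ σ ∈ F, σ (Fin.last M) ≠ k := by
    rintro _ ⟨⟨σ, hσP⟩, _, rfl⟩
    exact hσP
  have hnotF : ∀ (σ : Equiv.Perm (Fin (M + 1))) (hσP : σ ∈ P),
      (⟨σ, hσP⟩ : ↥P) ∉ S → σ ∉ F := by
    rintro σ hσP hσS ⟨s, hsS, hval⟩
    exact hσS (by rwa [show (⟨σ, hσP⟩ : ↥P) = s from Subtype.ext hval.symm])
  have hcardP : 2 * (M + 1) - 3 ≤ Nat.card ↥P := by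
    have h1 := copy_card (M := M) (by omega) k
    have h2 := fact_lin M hM
    rw [hPlast, Nat.card_coe_set_eq]
    have : {σ : Equiv.Perm (Fin (M + 1)) | σ (Fin.last M) ≠ k}.ncard =
        ({σ : Equiv.Perm (Fin (M + 1)) | σ (Fin.last M) ≠ k} : Set _).ncard := rfl
    omega
  have hsum := Set.ncard_add_ncard_compl S
  rcases hcase with hnc | hsmall
  · -- we show the graph is in fact connected
    apply hnc
    have hSc2 : 2 ≤ Sᶜ.ncard := by omega
    obtain ⟨x0, hx0⟩ : (Sᶜ : Set ↥P).Nonempty := by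
      rw [← Set.ncard_pos (Set.toFinite _)]; omega
    rw [SimpleGraph.connected_iff]
    refine ⟨?_, ⟨⟨x0, hx0⟩⟩⟩
    rintro ⟨⟨σx, hPx⟩, hSx⟩ ⟨⟨σy, hPy⟩, hSy⟩
    have hchain := main_chain hM k F hFsub (by omega) σx σy hPx hPy
      (hnotF σx hPx hSx) (hnotF σy hPy hSy)
    have hchain' : Chain (CW (M + 1)) (P \ F) σx σy := hchain
    exact chain_reach hchain' hPx hSx hPy hSy
  · omega
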